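/- arXiv:1509.05101 — 4 statements merged into one kernel-verified Lean document; each statement's English description precedes it below -/
import Mathlib

section
/- Let u, v : ℝ² → ℝ be C² functions of (x,t) with v(x,t) ≠ 0 and sin(u(x,t)) ≠ 0 at every point, and let P, Q : ℝ² → ℝ be C¹ functions of (x,t). For ε ∈ ℝ define u_ε = u − ε·Q/sin(u) and v_ε = v + ε·P/v. Then at every point, d/dε at ε = 0 of [ ∂/∂t (v_ε²/2) + ∂/∂x (cos u_ε) ] equals ∂P/∂t + ∂Q/∂x. In particular, for every conservation law D_t P + D_x Q = 0 of the sine-Gordon system, the vector field with characteristics (−Q/sin u, P/v) deforms the conservation law ∂_t(v²/2) + ∂_x(cos u) = 0 into the conservation law ∂_t P + ∂_x Q = 0. -/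
/-- Partial derivative with respect to the first variable `x` of a function of `(x, t)`. -/
noncomputable def px (f : ℝ × ℝ → ℝ) (p : ℝ × ℝ) : ℝ := deriv (fun x => f (x, p.2)) p.1

/-- Partial derivative with respect to the second variable `t` of a function of `(x, t)`. -/
noncomputable def pt (f : ℝ × ℝ → ℝ) (p : ℝ × ℝ) : ℝ := deriv (fun t => f (p.1, t)) p.2

/-- The vector field with characteristics `(−Q/sin u, P/v)`, i.e. `u_ε = u − ε Q / sin u`,
`v_ε = v + ε P / v`, deforms the divergence `D_t(v_ε²/2) + D_x(cos u_ε)` of the sine-Gordon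
conservation law `D_t(v²/2) + D_x(cos u) = 0` into the divergence `D_t P + D_x Q`; in
particular every conservation law `D_t P + D_x Q = 0` of the sine-Gordon system is obtained
from `D_t(v²/2) + D_x(cos u) = 0` by such a sub-symmetry deformation. -/
theorem sineGordon_deformation_to_any_CL (u v P Q : ℝ × ℝ → ℝ)
    (hu : ContDiff ℝ 2 u) (hv : ContDiff ℝ 2 v)
    (hP : ContDiff ℝ 1 P) (hQ : ContDiff ℝ 1 Q)
    (hvne : ∀ p : ℝ × ℝ, v p ≠ 0) (hsin : ∀ p : ℝ × ℝ, Real.sin (u p) ≠ 0) :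
    ∀ p : ℝ × ℝ,
      HasDerivAt (fun ε : ℝ =>
          pt (fun q => (v q + ε * (P q / v q)) ^ 2 / 2) p
            + px (fun q => Real.cos (u q - ε * (Q q / Real.sin (u q)))) p)
        (pt P p + px Q p) 0 := by
  intro p
  obtain ⟨a, b⟩ := p
  have hu1 : ContDiff ℝ 1 u := hu.of_le (by norm_num)
  have hv1 : ContDiff ℝ 1 v := hv.of_le (by norm_num)
  have hparT : ∀ (f : ℝ × ℝ → ℝ), ContDiff ℝ 1 f →
      HasDerivAt (fun s => f (a, s)) (pt f (a, b)) b := by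
    intro f hf
    have hd : DifferentiableAt ℝ (fun s => f (a, s)) b :=
      ((hf.differentiable one_ne_zero).comp
        ((differentiable_const a).prodMk differentiable_id)).differentiableAt
    simpa [pt] using hd.hasDerivAt
  have hparX : ∀ (f : ℝ × ℝ → ℝ), ContDiff ℝ 1 f →
      HasDerivAt (fun s => f (s, b)) (px f (a, b)) a := by
    intro f hf
    have hd : DifferentiableAt ℝ (fun s => f (s, b)) a :=
      ((hf.differentiable one_ne_zero).comp
        (differentiable_id.prodMk (differentiable_const b))).differentiableAt
    simpa [px] using hd.hasDerivAt
  have hvt := hparT v hv1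
  have hPt := hparT P hP
  have hux := hparX u hu1
  have hQx := hparX Q hQ
  have hv0 : v (a, b) ≠ 0 := hvne _
  have hs0 : Real.sin (u (a, b)) ≠ 0 := hsin _
  -- clean expression for the ε-family of divergences
  set v0 := v (a, b)
  set P0 := P (a, b)
  set u0 := u (a, b)
  set Q0 := Q (a, b)
  set vt := pt v (a, b)
  set Pt := pt P (a, b)
  set ux := px u (a, b)
  set Qx := px Q (a, b)
  have hFG : (fun ε : ℝ =>
          pt (fun q => (v q + ε * (P q / v q)) ^ 2 / 2) (a, b)
            + px (fun q => Real.cos (u q - ε * (Q q / Real.sin (u q)))) (a, b))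
      = (fun ε : ℝ =>
          (v0 + ε * (P0 / v0)) * (vt + ε * ((Pt * v0 - P0 * vt) / v0 ^ 2))
          - Real.sin (u0 - ε * (Q0 / Real.sin u0)) *
            (ux - ε * ((Qx * Real.sin u0 - Q0 * (Real.cos u0 * ux)) / Real.sin u0 ^ 2))) := by
    funext ε
    have h1 := (((hvt.add ((hPt.div hvt hv0).const_mul ε))).pow 2).div_const 2
    have h2 := ((hux.sub ((hQx.div (hux.sin) hs0).const_mul ε))).cos
    have e1 : pt (fun q => (v q + ε * (P q / v q)) ^ 2 / 2) (a, b) = _ := h1.deriv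
    have e2 : px (fun q => Real.cos (u q - ε * (Q q / Real.sin (u q)))) (a, b) = _ := h2.deriv
    rw [e1, e2]
    push_cast
    simp only [Pi.add_apply, Pi.sub_apply, Pi.div_apply]
    ring
  rw [hFG]
  have lin1 : HasDerivAt (fun ε : ℝ => v0 + ε * (P0 / v0)) (P0 / v0) 0 := by
    simpa using ((hasDerivAt_id (0 : ℝ)).mul_const (P0 / v0)).const_add v0
  have lin2 : HasDerivAt (fun ε : ℝ => vt + ε * ((Pt * v0 - P0 * vt) / v0 ^ 2))
      ((Pt * v0 - P0 * vt) / v0 ^ 2) 0 := by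
    simpa using ((hasDerivAt_id (0 : ℝ)).mul_const ((Pt * v0 - P0 * vt) / v0 ^ 2)).const_add vt
  have lin3 : HasDerivAt (fun ε : ℝ => u0 - ε * (Q0 / Real.sin u0)) (-(Q0 / Real.sin u0)) 0 := by
    simpa using ((hasDerivAt_id (0 : ℝ)).mul_const (Q0 / Real.sin u0)).const_sub u0
  have lin4 : HasDerivAt
      (fun ε : ℝ => ux - ε * ((Qx * Real.sin u0 - Q0 * (Real.cos u0 * ux)) / Real.sin u0 ^ 2))
      (-((Qx * Real.sin u0 - Q0 * (Real.cos u0 * ux)) / Real.sin u0 ^ 2)) 0 := by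
    simpa using ((hasDerivAt_id (0 : ℝ)).mul_const
      ((Qx * Real.sin u0 - Q0 * (Real.cos u0 * ux)) / Real.sin u0 ^ 2)).const_sub ux
  have hG := (lin1.mul lin2).sub (lin3.sin.mul lin4)
  refine hG.congr_deriv ?_
  simp only [mul_zero, zero_mul, add_zero, sub_zero, zero_add, mul_one, one_mul]
  field_simp
  ring
end

section
/- Let u, v : ℝ² → ℝ be C² functions of (x,t) solving the 1D Euler system u_t + u·u_x = 0, v_t + u·v_x = 0 at every point of ℝ², and let γ : ℝ³ → ℝ be C¹. Define g(x,t) := γ(x − t·u(x,t), u(x,t), v(x,t)) and, for ε ∈ ℝ, u_ε := u − ε·g·∂u/∂x. Then at every point (x,t), the derivative at ε = 0 of ε ↦ ∂u_ε/∂t + u_ε·∂u_ε/∂x equals 0. (This verifies that X₃ = γ(x − ut, u, v)∂_x, whose canonical characteristic is −γ·u_x, is a sub-symmetry of the sub-system Δ₁ = u_t + u u_x of the Euler system.) -/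
lemma hasDerivAt_slice_x {f : ℝ × ℝ → ℝ} {p : ℝ × ℝ} (hf : DifferentiableAt ℝ f p) :
    HasDerivAt (fun x => f (x, p.2)) (fderiv ℝ f p (1, 0)) p.1 := by
  have h1 : HasDerivAt (fun x : ℝ => ((x, p.2) : ℝ × ℝ)) (1, 0) p.1 :=
    (hasDerivAt_id p.1).prodMk (hasDerivAt_const p.1 p.2)
  have := hf.hasFDerivAt.comp_hasDerivAt p.1 h1
  exact this

lemma hasDerivAt_slice_t {f : ℝ × ℝ → ℝ} {p : ℝ × ℝ} (hf : DifferentiableAt ℝ f p) :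
    HasDerivAt (fun t => f (p.1, t)) (fderiv ℝ f p (0, 1)) p.2 := by
  have h1 : HasDerivAt (fun t : ℝ => ((p.1, t) : ℝ × ℝ)) (0, 1) p.2 :=
    (hasDerivAt_const p.2 p.1).prodMk (hasDerivAt_id p.2)
  have := hf.hasFDerivAt.comp_hasDerivAt p.2 h1
  exact this

lemma px_eq {f : ℝ × ℝ → ℝ} {p : ℝ × ℝ} (hf : DifferentiableAt ℝ f p) :
    px f p = fderiv ℝ f p (1, 0) := (hasDerivAt_slice_x hf).deriv

lemma pt_eq {f : ℝ × ℝ → ℝ} {p : ℝ × ℝ} (hf : DifferentiableAt ℝ f p) :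
    pt f p = fderiv ℝ f p (0, 1) := (hasDerivAt_slice_t hf).deriv

set_option maxHeartbeats 2000000 in
/-- The vector field `X₃ = γ(x − ut, u, v) ∂_x`, with canonical characteristic `−γ·u_x`,
is a sub-symmetry of the sub-system `Δ₁ = u_t + u u_x` of the 1D Euler system: on every
solution of the full system, the infinitesimal deformation of `Δ₁` along `X₃` vanishes. -/
theorem euler_subsymmetry_gamma (u v : ℝ × ℝ → ℝ) (γ : ℝ × ℝ × ℝ → ℝ)
    (hu : ContDiff ℝ 2 u) (hv : ContDiff ℝ 2 v) (hγ : ContDiff ℝ 1 γ)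
    (hsol₁ : ∀ p : ℝ × ℝ, pt u p + u p * px u p = 0)
    (hsol₂ : ∀ p : ℝ × ℝ, pt v p + u p * px v p = 0) :
    ∀ p : ℝ × ℝ,
      HasDerivAt (fun ε : ℝ =>
          pt (fun q => u q - ε * γ (q.1 - q.2 * u q, u q, v q) * px u q) p
            + (u p - ε * γ (p.1 - p.2 * u p, u p, v p) * px u p)
              * px (fun q => u q - ε * γ (q.1 - q.2 * u q, u q, v q) * px u q) p)
        0 0 := by
  intro p
  -- basic differentiability
  have hud : Differentiable ℝ u := hu.differentiable two_ne_zero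
  have hvd : Differentiable ℝ v := hv.differentiable two_ne_zero
  have hγd : Differentiable ℝ γ := hγ.differentiable one_ne_zero
  -- w = u_x as a function
  set w : ℝ × ℝ → ℝ := fun q => fderiv ℝ u q (1, 0) with hw_def
  have hpxu : ∀ q, px u q = w q := fun q => px_eq (hud q)
  have hptu : ∀ q, pt u q = fderiv ℝ u q (0, 1) := fun q => pt_eq (hud q)
  -- PDE in fderiv form
  have hsolu : ∀ q, fderiv ℝ u q (0, 1) + u q * fderiv ℝ u q (1, 0) = 0 := by
    intro q; have := hsol₁ q; rwa [hpxu, hptu] at this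
  have hsolv : ∀ q, fderiv ℝ v q (0, 1) + u q * fderiv ℝ v q (1, 0) = 0 := by
    intro q; have := hsol₂ q
    rwa [px_eq (hvd q), pt_eq (hvd q)] at this
  -- w is C¹
  have hDu : ContDiff ℝ 1 (fderiv ℝ u) := hu.fderiv_right (le_refl 2)
  have hw : ContDiff ℝ 1 w := by
    have := (ContinuousLinearMap.apply ℝ ℝ ((1 : ℝ), (0 : ℝ))).contDiff.comp hDu
    exact this
  -- Γ
  set Γ : ℝ × ℝ → ℝ := fun q => γ (q.1 - q.2 * u q, u q, v q) with hΓ_def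
  have hu1 : ContDiff ℝ 1 u := hu.of_le one_le_two
  have hv1 : ContDiff ℝ 1 v := hv.of_le one_le_two
  set φ : ℝ × ℝ → ℝ × ℝ × ℝ := fun q => (q.1 - q.2 * u q, u q, v q) with hφ_def
  have hφ : ContDiff ℝ 1 φ :=
    (contDiff_fst.sub (contDiff_snd.mul hu1)).prodMk (hu1.prodMk hv1)
  have hΓ : ContDiff ℝ 1 Γ := hγ.comp hφ
  set G : ℝ × ℝ → ℝ := fun q => Γ q * w q with hG_def
  have hG : ContDiff ℝ 1 G := hΓ.mul hw
  have hGd : Differentiable ℝ G := hG.differentiable one_ne_zero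
  -- abbreviations at p
  set Du : ℝ × ℝ →L[ℝ] ℝ := fderiv ℝ u p with hDu_def
  set Dv : ℝ × ℝ →L[ℝ] ℝ := fderiv ℝ v p with hDv_def
  set H : ℝ × ℝ →L[ℝ] ℝ × ℝ →L[ℝ] ℝ := fderiv ℝ (fderiv ℝ u) p with hH_def
  have hH : HasFDerivAt (fderiv ℝ u) H p := (hDu.differentiable one_ne_zero p).hasFDerivAt
  -- derivative of w
  have hw' : HasFDerivAt w ((ContinuousLinearMap.apply ℝ ℝ ((1 : ℝ), (0 : ℝ))).comp H) p := by
    have := (ContinuousLinearMap.apply ℝ ℝ ((1 : ℝ), (0 : ℝ))).hasFDerivAt.comp p hH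
    exact this
  set Dw : ℝ × ℝ →L[ℝ] ℝ := (ContinuousLinearMap.apply ℝ ℝ ((1 : ℝ), (0 : ℝ))).comp H with hDw_def
  -- symmetry of second derivative
  have hsymm : H (0, 1) (1, 0) = H (1, 0) (0, 1) :=
    second_derivative_symmetric (fun y => (hud y).hasFDerivAt) hH (0, 1) (1, 0)
  -- Claim (A): Dw (0,1) + u p * Dw (1,0) + w p * w p = 0
  have claimA : Dw (0, 1) + u p * Dw (1, 0) + w p * w p = 0 := by
    -- differentiate the identically-zero function q ↦ Du_q(0,1) + u q * Du_q(1,0)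
    have h1 : HasFDerivAt (fun q => fderiv ℝ u q (0, 1))
        ((ContinuousLinearMap.apply ℝ ℝ ((0 : ℝ), (1 : ℝ))).comp H) p := by
      have := (ContinuousLinearMap.apply ℝ ℝ ((0 : ℝ), (1 : ℝ))).hasFDerivAt.comp p hH
      exact this
    have h2 : HasFDerivAt (fun q => fderiv ℝ u q (1, 0)) Dw p := hw'
    have h3 : HasFDerivAt (fun q => u q * fderiv ℝ u q (1, 0))
        (u p • Dw + w p • Du) p := by
      exact (hud p).hasFDerivAt.mul h2
    have h4 : HasFDerivAt (fun q => fderiv ℝ u q (0, 1) + u q * fderiv ℝ u q (1, 0))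
        ((ContinuousLinearMap.apply ℝ ℝ ((0 : ℝ), (1 : ℝ))).comp H + (u p • Dw + w p • Du)) p :=
      h1.add h3
    have h0 : HasFDerivAt (fun q : ℝ × ℝ => fderiv ℝ u q (0, 1) + u q * fderiv ℝ u q (1, 0))
        (0 : ℝ × ℝ →L[ℝ] ℝ) p := by
      have : (fun q : ℝ × ℝ => fderiv ℝ u q (0, 1) + u q * fderiv ℝ u q (1, 0))
          = fun _ => (0 : ℝ) := funext fun q => hsolu q
      rw [this]; exact hasFDerivAt_const 0 p
    have huniq := h4.unique h0
    have := congrArg (fun L : ℝ × ℝ →L[ℝ] ℝ => L (1, 0)) huniq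
    simp only [ContinuousLinearMap.add_apply, ContinuousLinearMap.coe_comp',
      Function.comp_apply, ContinuousLinearMap.smul_apply, ContinuousLinearMap.apply_apply,
      ContinuousLinearMap.zero_apply, smul_eq_mul] at this
    -- this : H (1,0) (0,1) + (u p * Dw (1,0) + w p * Du (1,0)) = 0
    have hDw01 : Dw (0, 1) = H (1, 0) (0, 1) := by
      simp [hDw_def, ContinuousLinearMap.apply_apply, hsymm]
    have hwp : Du (1, 0) = w p := rfl
    rw [hDw01]
    rw [hwp] at this
    linarith
  -- derivative of φ
  have hDu' : HasFDerivAt u Du p := (hud p).hasFDerivAt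
  have hDv' : HasFDerivAt v Dv p := (hvd p).hasFDerivAt
  have hφ1 : HasFDerivAt (fun q : ℝ × ℝ => q.1 - q.2 * u q)
      (ContinuousLinearMap.fst ℝ ℝ ℝ - (p.2 • Du + u p • ContinuousLinearMap.snd ℝ ℝ ℝ)) p := by
    have hsnd : HasFDerivAt (fun q : ℝ × ℝ => q.2) (ContinuousLinearMap.snd ℝ ℝ ℝ) p :=
      hasFDerivAt_snd
    have := hasFDerivAt_fst.sub (hsnd.mul hDu')
    exact this
  set Lφ : ℝ × ℝ →L[ℝ] ℝ × ℝ × ℝ :=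
    (ContinuousLinearMap.fst ℝ ℝ ℝ - (p.2 • Du + u p • ContinuousLinearMap.snd ℝ ℝ ℝ)).prod
      (Du.prod Dv) with hLφ_def
  have hφ' : HasFDerivAt φ Lφ p := hφ1.prodMk (hDu'.prodMk hDv')
  -- derivative of Γ
  set Dγ : ℝ × ℝ × ℝ →L[ℝ] ℝ := fderiv ℝ γ (φ p) with hDγ_def
  have hΓ' : HasFDerivAt Γ (Dγ.comp Lφ) p := (hγd (φ p)).hasFDerivAt.comp p hφ'
  -- Claim (B): DΓ (0,1) + u p * DΓ (1,0) = 0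
  have claimB : (Dγ.comp Lφ) (0, 1) + u p * (Dγ.comp Lφ) (1, 0) = 0 := by
    have hvec : Lφ (0, 1) + u p • Lφ (1, 0) = 0 := by
      have h1 := hsolu p
      have h2 := hsolv p
      simp only [hLφ_def, ContinuousLinearMap.prod_apply, ContinuousLinearMap.sub_apply,
        ContinuousLinearMap.add_apply, ContinuousLinearMap.smul_apply,
        ContinuousLinearMap.coe_fst', ContinuousLinearMap.coe_snd', smul_eq_mul,
        Prod.smul_mk, Prod.mk_add_mk, Prod.mk_eq_zero, hDu_def, hDv_def]
      refine ⟨by linear_combination (-p.2) * h1, by linear_combination h1, by linear_combination h2⟩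
    calc (Dγ.comp Lφ) (0, 1) + u p * (Dγ.comp Lφ) (1, 0)
        = Dγ (Lφ (0, 1) + u p • Lφ (1, 0)) := by
          simp [ContinuousLinearMap.comp_apply, map_add, map_smul, smul_eq_mul]
      _ = 0 := by rw [hvec]; simp
  -- derivative of G
  have hG' : HasFDerivAt G (Γ p • Dw + w p • Dγ.comp Lφ) p := hΓ'.mul hw'
  have hfG : fderiv ℝ G p = Γ p • Dw + w p • Dγ.comp Lφ := hG'.fderiv
  -- the key identity
  have key : fderiv ℝ G p (0, 1) + u p * fderiv ℝ G p (1, 0) + G p * w p = 0 := by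
    rw [hfG]
    simp only [ContinuousLinearMap.add_apply, ContinuousLinearMap.smul_apply, smul_eq_mul]
    have : G p = Γ p * w p := rfl
    rw [this]
    linear_combination Γ p * claimA + w p * claimB
  -- rewrite the deformed function: for each ε it equals u - ε • G
  have hfun : ∀ ε : ℝ, (fun q => u q - ε * γ (q.1 - q.2 * u q, u q, v q) * px u q)
      = fun q => u q - ε * G q := by
    intro ε; funext q
    rw [hpxu q]
    simp only [hG_def, hΓ_def]
    ring
  -- compute pt and px of the deformed function
  have hpt : ∀ ε : ℝ, pt (fun q => u q - ε * γ (q.1 - q.2 * u q, u q, v q) * px u q) p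
      = fderiv ℝ u p (0, 1) - ε * fderiv ℝ G p (0, 1) := by
    intro ε
    rw [hfun ε]
    have h1 := hasDerivAt_slice_t (hud p)
    have h2 := hasDerivAt_slice_t (hGd p)
    have := h1.sub (h2.const_mul ε)
    exact this.deriv
  have hpx : ∀ ε : ℝ, px (fun q => u q - ε * γ (q.1 - q.2 * u q, u q, v q) * px u q) p
      = fderiv ℝ u p (1, 0) - ε * fderiv ℝ G p (1, 0) := by
    intro ε
    rw [hfun ε]
    have h1 := hasDerivAt_slice_x (hud p)
    have h2 := hasDerivAt_slice_x (hGd p)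
    have := h1.sub (h2.const_mul ε)
    exact this.deriv
  have hcoef : γ (p.1 - p.2 * u p, u p, v p) * px u p = G p := by
    rw [hpxu p]
  -- now the function of ε is an explicit polynomial
  have hfun2 : (fun ε : ℝ =>
      pt (fun q => u q - ε * γ (q.1 - q.2 * u q, u q, v q) * px u q) p
        + (u p - ε * γ (p.1 - p.2 * u p, u p, v p) * px u p)
          * px (fun q => u q - ε * γ (q.1 - q.2 * u q, u q, v q) * px u q) p)
      = fun ε : ℝ => (fderiv ℝ u p (0, 1) - ε * fderiv ℝ G p (0, 1))
        + (u p - ε * G p) * (fderiv ℝ u p (1, 0) - ε * fderiv ℝ G p (1, 0)) := by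
    funext ε
    rw [hpt ε, hpx ε, mul_assoc, hcoef]
  rw [hfun2]
  -- compute the derivative of the polynomial at 0
  have hd : HasDerivAt (fun ε : ℝ => (fderiv ℝ u p (0, 1) - ε * fderiv ℝ G p (0, 1))
      + (u p - ε * G p) * (fderiv ℝ u p (1, 0) - ε * fderiv ℝ G p (1, 0)))
      (-(fderiv ℝ G p (0, 1)) + ((-(G p)) * (fderiv ℝ u p (1, 0) - 0 * fderiv ℝ G p (1, 0))
        + (u p - 0 * G p) * (-(fderiv ℝ G p (1, 0))))) 0 := by
    have ha : HasDerivAt (fun ε : ℝ => fderiv ℝ u p (0, 1) - ε * fderiv ℝ G p (0, 1))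
        (-(fderiv ℝ G p (0, 1))) 0 := by
      have h := (hasDerivAt_const (0:ℝ) (fderiv ℝ u p (0, 1))).sub
        ((hasDerivAt_id (0:ℝ)).mul_const (fderiv ℝ G p (0, 1)))
      simp only [one_mul, zero_sub] at h
      exact h
    have hb : HasDerivAt (fun ε : ℝ => u p - ε * G p) (-(G p)) 0 := by
      have h := (hasDerivAt_const (0:ℝ) (u p)).sub
        ((hasDerivAt_id (0:ℝ)).mul_const (G p))
      simp only [one_mul, zero_sub] at h
      exact h
    have hc : HasDerivAt (fun ε : ℝ => fderiv ℝ u p (1, 0) - ε * fderiv ℝ G p (1, 0))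
        (-(fderiv ℝ G p (1, 0))) 0 := by
      have h := (hasDerivAt_const (0:ℝ) (fderiv ℝ u p (1, 0))).sub
        ((hasDerivAt_id (0:ℝ)).mul_const (fderiv ℝ G p (1, 0)))
      simp only [one_mul, zero_sub] at h
      exact h
    exact ha.add (hb.mul hc)
  convert hd using 1
  have hwp : fderiv ℝ u p (1, 0) = w p := rfl
  rw [hwp]
  nlinarith [key]
end

section
/- Let F : ℝᵐ × ℝᵏ → ℝ be C² with the set {(x,y) : F(x,y) ≠ 0} dense in ℝᵐ × ℝᵏ, and suppose there exist C¹ functions g₁, …, g_k : ℝᵐ × ℝᵏ → ℝ such that ∂F/∂y_j = g_j·F everywhere for each j = 1, …, k. Then there exist a C¹ function Φ : ℝᵐ × ℝᵏ → ℝ and a function C : ℝᵐ → ℝ such that F(x,y) = C(x)·e^{Φ(x,y)} for all (x,y). Hence the equation F = 0 is, up to the nonzero multiplicative factor e^{Φ}, an equation in the x-variables alone (it is decoupled in those variables). -/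
open intervalIntegral MeasureTheory

variable {m k : ℕ}

local notation "P" => (Fin m → ℝ) × (Fin k → ℝ)

-- Step 1: symmetry of the g's
theorem step1_sym (F : P → ℝ) (hF : ContDiff ℝ 2 F)
    (hdense : Dense {p : P | F p ≠ 0})
    (g : Fin k → P → ℝ) (hg : ∀ j, ContDiff ℝ 1 (g j))
    (h : ∀ j, ∀ p : P, fderiv ℝ F p (0, Pi.single j 1) = g j p * F p)
    (i j : Fin k) (q : P) :
    fderiv ℝ (g j) q (0, Pi.single i 1) = fderiv ℝ (g i) q (0, Pi.single j 1) := by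
  have hFd : Differentiable ℝ F := hF.differentiable two_ne_zero
  have hF' : ContDiff ℝ 1 (fderiv ℝ F) := hF.fderiv_right (le_refl 2)
  have hcont : ∀ l : Fin k, Continuous fun q : P => fderiv ℝ (g l) q (0, Pi.single l 1) :=
    fun l => ((hg l).continuous_fderiv one_ne_zero).clm_apply continuous_const
  have key : ∀ q : P, F q ≠ 0 →
      fderiv ℝ (g j) q (0, Pi.single i 1) = fderiv ℝ (g i) q (0, Pi.single j 1) := by
    intro q hq
    have hsymm : IsSymmSndFDerivAt ℝ F q :=
      (hF.contDiffAt).isSymmSndFDerivAt (by simp)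
    -- compute the second derivative in coordinate directions
    have claim : ∀ (l : Fin k) (u : P),
        fderiv ℝ (fderiv ℝ F) q u (0, Pi.single l 1)
          = fderiv ℝ (g l) q u * F q + g l q * fderiv ℝ F q u := by
      intro l u
      have h1 : HasFDerivAt (fun p : P => fderiv ℝ F p (0, Pi.single l 1))
          ((fderiv ℝ (fderiv ℝ F) q).flip ((0 : Fin m → ℝ), Pi.single l 1)) q := by
        have := ((hF'.differentiable one_ne_zero q).hasFDerivAt).clm_apply
          (hasFDerivAt_const ((0 : Fin m → ℝ), Pi.single l 1) q)
        simpa using this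
      have h2 : HasFDerivAt (fun p : P => g l p * F p)
          (g l q • fderiv ℝ F q + F q • fderiv ℝ (g l) q) q :=
        ((hg l).differentiable one_ne_zero q).hasFDerivAt.mul (hFd q).hasFDerivAt
      have h2' : HasFDerivAt (fun p : P => fderiv ℝ F p (0, Pi.single l 1))
          (g l q • fderiv ℝ F q + F q • fderiv ℝ (g l) q) q := by
        apply h2.congr_of_eventuallyEq
        filter_upwards with p using (h l p).symm ▸ rfl
      have := h1.unique h2'
      have := congrArg (fun L : P →L[ℝ] ℝ => L u) this
      simp only [ContinuousLinearMap.flip_apply, ContinuousLinearMap.add_apply,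
        ContinuousLinearMap.smul_apply, smul_eq_mul] at this
      rw [this]; ring
    have e1 := claim j ((0 : Fin m → ℝ), Pi.single i 1)
    have e2 := claim i ((0 : Fin m → ℝ), Pi.single j 1)
    have hsij := hsymm ((0 : Fin m → ℝ), Pi.single i 1) ((0 : Fin m → ℝ), Pi.single j 1)
    rw [e1, e2] at hsij
    rw [h i q, h j q] at hsij
    have : fderiv ℝ (g j) q (0, Pi.single i 1) * F q
        = fderiv ℝ (g i) q (0, Pi.single j 1) * F q := by nlinarith [hsij]
    exact mul_right_cancel₀ hq this
  have c1 : Continuous fun q : P => fderiv ℝ (g j) q (0, Pi.single i 1) :=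
    ((hg j).continuous_fderiv one_ne_zero).clm_apply continuous_const
  have c2 : Continuous fun q : P => fderiv ℝ (g i) q (0, Pi.single j 1) :=
    ((hg i).continuous_fderiv one_ne_zero).clm_apply continuous_const
  exact congrFun (c1.ext_on hdense c2 key) q

theorem expand_y (y : Fin k → ℝ) :
    ((0, y) : P) = ∑ j, y j • (((0 : Fin m → ℝ), Pi.single j 1) : P) := by
  refine Prod.ext ?_ ?_
  · simp [Prod.fst_sum]
  · simp only [Prod.snd_sum, Prod.smul_snd]
    funext l
    simp [Finset.sum_apply, Pi.single_apply, Finset.sum_ite_eq']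

theorem step2_potential (g : Fin k → P → ℝ) (hg : ∀ j, ContDiff ℝ 1 (g j))
    (hsym : ∀ (i j : Fin k) (q : P),
      fderiv ℝ (g j) q (0, Pi.single i 1) = fderiv ℝ (g i) q (0, Pi.single j 1)) :
    ∃ Φ : P → ℝ, ContDiff ℝ 1 Φ ∧
      ∀ (p : P) (i : Fin k), fderiv ℝ Φ p (0, Pi.single i 1) = g i p := by
  classical
  -- the linear map (x,y) ↦ (x, t•y)
  set Mt : ℝ → P →L[ℝ] P := fun t =>
    (ContinuousLinearMap.fst ℝ (Fin m → ℝ) (Fin k → ℝ)).prod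
      (t • ContinuousLinearMap.snd ℝ (Fin m → ℝ) (Fin k → ℝ)) with hMt
  have hMt_apply : ∀ (t : ℝ) (p : P), Mt t p = (p.1, t • p.2) := fun t p => rfl
  -- projections
  set π : Fin k → P →L[ℝ] ℝ := fun j =>
    (ContinuousLinearMap.proj j).comp (ContinuousLinearMap.snd ℝ (Fin m → ℝ) (Fin k → ℝ)) with hπ
  have hπ_apply : ∀ (j : Fin k) (p : P), π j p = p.2 j := fun j p => rfl
  -- continuity of t ↦ Mt t
  have hMt_cont : Continuous Mt := by
    have : Mt = fun t =>
        ((ContinuousLinearMap.fst ℝ (Fin m → ℝ) (Fin k → ℝ)).prod 0)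
          + t • ((0 : P →L[ℝ] (Fin m → ℝ)).prod
              (ContinuousLinearMap.snd ℝ (Fin m → ℝ) (Fin k → ℝ))) := by
      funext t; ext p <;> simp [Mt]
    rw [this]
    exact continuous_const.add (continuous_id.smul continuous_const)
  -- integrand and its derivative in p
  set f : ℝ → P → ℝ := fun t p => ∑ j, p.2 j * g j (p.1, t • p.2) with hf
  set D : ℝ → P → (P →L[ℝ] ℝ) := fun t p =>
    ∑ j, (g j (p.1, t • p.2) • π j
      + p.2 j • ((fderiv ℝ (g j) (p.1, t • p.2)).comp (Mt t))) with hD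
  have hgc : ∀ j, Continuous (g j) := fun j => (hg j).continuous
  have hgd : ∀ j, Differentiable ℝ (g j) := fun j => (hg j).differentiable one_ne_zero
  have hgf : ∀ j, Continuous (fderiv ℝ (g j)) := fun j => (hg j).continuous_fderiv one_ne_zero
  have hq_cont : Continuous (fun q : ℝ × P => (q.2.1, q.1 • q.2.2)) := by fun_prop
  -- joint continuity of f
  have hf_cont : Continuous (fun q : ℝ × P => f q.1 q.2) := by
    apply continuous_finset_sum
    intro j _
    have c1 : Continuous fun q : ℝ × P => q.2.2 j := by fun_prop
    exact c1.mul ((hgc j).comp hq_cont)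
  -- joint continuity of D
  have hD_cont : Continuous (fun q : ℝ × P => D q.1 q.2) := by
    apply continuous_finset_sum
    intro j _
    apply Continuous.add
    · exact (((hgc j).comp hq_cont).smul continuous_const)
    · have c1 : Continuous fun q : ℝ × P => q.2.2 j := by fun_prop
      exact c1.smul ((((hgf j).comp hq_cont)).clm_comp (hMt_cont.comp continuous_fst))
  -- pointwise derivative of f in p
  have hf_der : ∀ (t : ℝ) (p : P), HasFDerivAt (fun p => f t p) (D t p) p := by
    intro t p
    apply HasFDerivAt.fun_sum
    intro j _
    have h1 : HasFDerivAt (fun p : P => p.2 j) (π j) p := (π j).hasFDerivAt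
    have h2 : HasFDerivAt (fun p : P => g j (p.1, t • p.2))
        ((fderiv ℝ (g j) (p.1, t • p.2)).comp (Mt t)) p := by
      have := ((hgd j (p.1, t • p.2)).hasFDerivAt).comp p ((Mt t).hasFDerivAt)
      simpa [hMt_apply, Function.comp_def] using this
    have := h1.mul h2
    simpa [hπ_apply, add_comm, Pi.mul_def] using this
  set Φ : P → ℝ := fun p => ∫ t in (0:ℝ)..1, f t p with hΦdef
  -- differentiability of Φ with derivative ∫ D t p dt
  have hΦ_der : ∀ p₀ : P, HasFDerivAt Φ (∫ t in (0:ℝ)..1, D t p₀) p₀ := by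
    intro p₀
    -- bound on the compact set Icc 0 1 ×ˢ closedBall p₀ 1
    obtain ⟨M, hM⟩ : ∃ M, ∀ q ∈ (Set.Icc (0:ℝ) 1) ×ˢ Metric.closedBall p₀ 1,
        ‖D q.1 q.2‖ ≤ M := by
      rcases (isCompact_Icc.prod (isCompact_closedBall p₀ 1)).exists_bound_of_continuousOn
        hD_cont.continuousOn with ⟨M, hM⟩
      exact ⟨M, hM⟩
    refine intervalIntegral.hasFDerivAt_integral_of_dominated_of_fderiv_le
      (𝕜 := ℝ) (F := fun p t => f t p) (F' := fun p t => D t p)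
      (bound := fun _ => M) (Metric.ball_mem_nhds p₀ one_pos) ?_ ?_ ?_ ?_ ?_ ?_
    · filter_upwards with p
      exact (hf_cont.comp (continuous_id.prodMk continuous_const)).aestronglyMeasurable
    · exact (hf_cont.comp (continuous_id.prodMk continuous_const)).intervalIntegrable 0 1
    · exact (hD_cont.comp (continuous_id.prodMk continuous_const)).aestronglyMeasurable
    · filter_upwards with t ht p hp
      have ht' : t ∈ Set.Icc (0:ℝ) 1 := by
        rcases ht with ht; exact ⟨le_of_lt (by simpa using ht.1), by simpa using ht.2⟩
      exact hM (t, p) ⟨ht', Metric.ball_subset_closedBall hp⟩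
    · exact intervalIntegrable_const
    · filter_upwards with t ht p hp
      exact hf_der t p
  have hΦ_fderiv : ∀ p : P, fderiv ℝ Φ p = ∫ t in (0:ℝ)..1, D t p :=
    fun p => (hΦ_der p).fderiv
  have hΦ_contdiff : ContDiff ℝ 1 Φ := by
    rw [contDiff_one_iff_fderiv]
    constructor
    · exact fun p => ⟨_, hΦ_der p⟩
    · have : Continuous fun p : P => ∫ t in (0:ℝ)..1, D t p :=
        continuous_parametric_intervalIntegral_of_continuous'
          (f := fun p t => D t p) (μ := volume)
          (hD_cont.comp continuous_swap) 0 1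
      exact (funext hΦ_fderiv) ▸ this
  refine ⟨Φ, hΦ_contdiff, ?_⟩
  intro p i
  -- FTC computation for the directional derivative
  have hder1 : ∀ t : ℝ, HasDerivAt (fun s : ℝ => s * g i (p.1, s • p.2))
      (g i (p.1, t • p.2) + t * fderiv ℝ (g i) (p.1, t • p.2) ((0 : Fin m → ℝ), p.2)) t := by
    intro t
    have hc : HasDerivAt (fun s : ℝ => ((p.1, s • p.2) : P)) ((0 : Fin m → ℝ), p.2) t := by
      have h2 : HasDerivAt (fun s : ℝ => s • p.2) p.2 t := by
        simpa using (hasDerivAt_id t).smul_const p.2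
      exact (hasDerivAt_const t p.1).prodMk h2
    have hgi : HasDerivAt (fun s : ℝ => g i (p.1, s • p.2))
        (fderiv ℝ (g i) (p.1, t • p.2) ((0 : Fin m → ℝ), p.2)) t :=
      (hgd i (p.1, t • p.2)).hasFDerivAt.comp_hasDerivAt t hc
    have := (hasDerivAt_id t).mul hgi
    simpa [add_comm, mul_comm, Pi.mul_def] using this
  have hint1 : ∫ t in (0:ℝ)..1,
      (g i (p.1, t • p.2) + t * fderiv ℝ (g i) (p.1, t • p.2) ((0 : Fin m → ℝ), p.2))
        = g i p := by
    have hcont1 : Continuous fun t : ℝ =>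
        g i (p.1, t • p.2) + t * fderiv ℝ (g i) (p.1, t • p.2) ((0 : Fin m → ℝ), p.2) := by
      have c1 : Continuous fun t : ℝ => ((p.1, t • p.2) : P) := by fun_prop
      exact ((hgc i).comp c1).add
        (continuous_id.mul (((hgf i).comp c1).clm_apply continuous_const))
    have := intervalIntegral.integral_eq_sub_of_hasDerivAt
      (f := fun s : ℝ => s * g i (p.1, s • p.2)) (fun t _ => hder1 t)
      (hcont1.intervalIntegrable 0 1)
    rw [this]
    simp
  -- identify the integrands using symmetry
  have hDval : ∀ t : ℝ, D t p ((0 : Fin m → ℝ), Pi.single i 1)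
      = g i (p.1, t • p.2) + t * fderiv ℝ (g i) (p.1, t • p.2) ((0 : Fin m → ℝ), p.2) := by
    intro t
    have expand : fderiv ℝ (g i) (p.1, t • p.2) ((0 : Fin m → ℝ), p.2)
        = ∑ j, p.2 j * fderiv ℝ (g i) (p.1, t • p.2) ((0 : Fin m → ℝ), Pi.single j 1) := by
      have hy : ((0 : Fin m → ℝ), p.2)
          = ∑ j, p.2 j • (((0 : Fin m → ℝ), Pi.single j 1) : P) := expand_y p.2
      rw [hy, map_sum]
      exact Finset.sum_congr rfl fun j _ => by
        rw [ContinuousLinearMap.map_smul, smul_eq_mul]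
    rw [hD, ContinuousLinearMap.sum_apply]
    simp only [ContinuousLinearMap.add_apply, ContinuousLinearMap.smul_apply,
      ContinuousLinearMap.comp_apply, smul_eq_mul]
    have hπi : ∀ j : Fin k, π j (((0 : Fin m → ℝ), Pi.single i 1) : P)
        = (Pi.single i (1:ℝ) : Fin k → ℝ) j := fun j => rfl
    have hMti : Mt t (((0 : Fin m → ℝ), Pi.single i 1) : P)
        = (((0 : Fin m → ℝ), t • (Pi.single i 1 : Fin k → ℝ)) : P) := rfl
    simp only [hπi, hMti]
    have term2 : ∀ j : Fin k, fderiv ℝ (g j) (p.1, t • p.2)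
        (((0 : Fin m → ℝ), t • (Pi.single i 1 : Fin k → ℝ)) : P)
        = t * fderiv ℝ (g i) (p.1, t • p.2) (((0 : Fin m → ℝ), Pi.single j 1) : P) := by
      intro j
      have hsmul : (((0 : Fin m → ℝ), t • (Pi.single i 1 : Fin k → ℝ)) : P)
          = t • (((0 : Fin m → ℝ), Pi.single i 1) : P) := by
        simp [Prod.smul_def]
      rw [hsmul, ContinuousLinearMap.map_smul, smul_eq_mul, hsym i j]
    simp only [term2]
    rw [Finset.sum_add_distrib, expand]
    have : ∑ j, g j (p.1, t • p.2) * (Pi.single i 1 : Fin k → ℝ) j = g i (p.1, t • p.2) := by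
      simp [Pi.single_apply, mul_ite, Finset.sum_ite_eq']
    rw [this, Finset.mul_sum]
    congr 1
    refine Finset.sum_congr rfl fun j _ => by ring
  -- put everything together
  rw [hΦ_fderiv p]
  have hintD : IntervalIntegrable (fun t => D t p) volume 0 1 :=
    (hD_cont.comp (continuous_id.prodMk continuous_const)).intervalIntegrable 0 1
  rw [ContinuousLinearMap.intervalIntegral_apply hintD]
  calc (∫ t in (0:ℝ)..1, D t p ((0 : Fin m → ℝ), Pi.single i 1))
      = ∫ t in (0:ℝ)..1,
        (g i (p.1, t • p.2) + t * fderiv ℝ (g i) (p.1, t • p.2) ((0 : Fin m → ℝ), p.2)) := by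
        exact intervalIntegral.integral_congr fun t _ => hDval t
    _ = g i p := hint1

theorem expand_y' (y : Fin k → ℝ) :
    ((0, y) : P) = ∑ j, y j • (((0 : Fin m → ℝ), Pi.single j 1) : P) := by
  refine Prod.ext ?_ ?_
  · simp [Prod.fst_sum]
  · simp only [Prod.snd_sum, Prod.smul_snd]
    funext l
    simp [Finset.sum_apply, Pi.single_apply, Finset.sum_ite_eq']

theorem step3 (F : P → ℝ) (hF : ContDiff ℝ 2 F)
    (g : Fin k → P → ℝ) (hg : ∀ j, ContDiff ℝ 1 (g j))
    (h : ∀ j, ∀ p : P, fderiv ℝ F p (0, Pi.single j 1) = g j p * F p)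
    (Φ : P → ℝ) (hΦ : ContDiff ℝ 1 Φ)
    (hΦy : ∀ (p : P) (i : Fin k), fderiv ℝ Φ p (0, Pi.single i 1) = g i p) :
    ∃ C : (Fin m → ℝ) → ℝ, ∀ p : P, F p = C p.1 * Real.exp (Φ p) := by
  have hFd : Differentiable ℝ F := hF.differentiable two_ne_zero
  have hΦd : Differentiable ℝ Φ := hΦ.differentiable one_ne_zero
  set u : P → ℝ := fun p => F p * Real.exp (-Φ p) with hu
  have hu_der : ∀ p : P, HasFDerivAt u
      (F p • (Real.exp (-Φ p) • -(fderiv ℝ Φ p)) + Real.exp (-Φ p) • fderiv ℝ F p) p := by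
    intro p
    have he : HasFDerivAt (fun p : P => Real.exp (-Φ p))
        (Real.exp (-Φ p) • -(fderiv ℝ Φ p)) p := ((hΦd p).hasFDerivAt.neg).exp
    exact (hFd p).hasFDerivAt.mul he
  have hu_diff : Differentiable ℝ u := fun p => ⟨_, hu_der p⟩
  have hu_y : ∀ (p : P) (y : Fin k → ℝ), fderiv ℝ u p ((0 : Fin m → ℝ), y) = 0 := by
    intro p y
    have hbase : ∀ i : Fin k, fderiv ℝ u p ((0 : Fin m → ℝ), Pi.single i 1) = 0 := by
      intro i
      rw [(hu_der p).fderiv]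
      simp only [ContinuousLinearMap.add_apply, ContinuousLinearMap.smul_apply,
        ContinuousLinearMap.neg_apply, smul_eq_mul]
      rw [hΦy p i, h i p]
      ring
    rw [expand_y' y, map_sum]
    simp only [ContinuousLinearMap.map_smul, hbase, smul_zero, Finset.sum_const_zero]
  refine ⟨fun x => u (x, 0), ?_⟩
  intro p
  have hconst : u (p.1, p.2) = u (p.1, 0) := by
    set w : (Fin k → ℝ) → ℝ := fun y => u (p.1, y) with hw
    have hw_der : ∀ y : Fin k → ℝ, HasFDerivAt w
        ((fderiv ℝ u (p.1, y)).comp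
          (ContinuousLinearMap.inr ℝ (Fin m → ℝ) (Fin k → ℝ))) y := by
      intro y
      have hin : HasFDerivAt (fun y : Fin k → ℝ => ((p.1, y) : P))
          (ContinuousLinearMap.inr ℝ (Fin m → ℝ) (Fin k → ℝ)) y := by
        have h0 := HasFDerivAt.prodMk (hasFDerivAt_const (𝕜 := ℝ) p.1 y) (hasFDerivAt_id (𝕜 := ℝ) y)
        have heq : ((0 : (Fin k → ℝ) →L[ℝ] (Fin m → ℝ)).prod
            (ContinuousLinearMap.id ℝ (Fin k → ℝ)))
            = ContinuousLinearMap.inr ℝ (Fin m → ℝ) (Fin k → ℝ) := by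
          ext v <;> simp
        rw [← heq]
        exact h0
      exact (hu_diff (p.1, y)).hasFDerivAt.comp y hin
    have hw_diff : Differentiable ℝ w := fun y => ⟨_, hw_der y⟩
    have hw0 : ∀ y, fderiv ℝ w y = 0 := by
      intro y
      rw [(hw_der y).fderiv]
      ext v
      simp only [ContinuousLinearMap.comp_apply, ContinuousLinearMap.inr_apply,
        ContinuousLinearMap.zero_apply]
      exact hu_y (p.1, y) v
    exact is_const_of_fderiv_eq_zero hw_diff hw0 p.2 0
  calc F p = u p * Real.exp (Φ p) := by
        show F p = F p * Real.exp (-Φ p) * Real.exp (Φ p)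
        rw [mul_assoc, ← Real.exp_add]
        simp
    _ = u (p.1, 0) * Real.exp (Φ p) := by
        rw [show u p = u (p.1, p.2) from by rw [Prod.mk.eta], hconst]

/-- Analytic core of the decoupling theorem: if `F : ℝᵐ × ℝᵏ → ℝ` is C² with `{F ≠ 0}`
dense, and there are C¹ functions `g_j` with `∂F/∂y_j = g_j · F` everywhere, then
`F(x,y) = C(x) e^{Φ(x,y)}` for some C¹ potential `Φ` and some function `C` of `x` alone;
hence `F = 0` is, up to the nonzero factor `e^Φ`, an equation in the `x`-variables only. -/
theorem decoupling_representation (m k : ℕ)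
    (F : (Fin m → ℝ) × (Fin k → ℝ) → ℝ)
    (hF : ContDiff ℝ 2 F)
    (hdense : Dense {p : (Fin m → ℝ) × (Fin k → ℝ) | F p ≠ 0})
    (g : Fin k → (Fin m → ℝ) × (Fin k → ℝ) → ℝ)
    (hg : ∀ j : Fin k, ContDiff ℝ 1 (g j))
    (h : ∀ j : Fin k, ∀ p : (Fin m → ℝ) × (Fin k → ℝ),
      fderiv ℝ F p (0, Pi.single j 1) = g j p * F p) :
    ∃ (Φ : (Fin m → ℝ) × (Fin k → ℝ) → ℝ) (C : (Fin m → ℝ) → ℝ),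
      ContDiff ℝ 1 Φ ∧
      ∀ p : (Fin m → ℝ) × (Fin k → ℝ), F p = C p.1 * Real.exp (Φ p) := by
  obtain ⟨Φ, hΦ, hΦy⟩ := step2_potential g hg (fun i j q => step1_sym F hF hdense g hg h i j q)
  obtain ⟨C, hC⟩ := step3 F hF g hg h Φ hΦ hΦy
  exact ⟨Φ, C, hΦ, hC⟩
end

section
/- Let A¹, A² : ℝ² × ℝ² → ℝ be C² functions of (x, u) = (x₁, x₂, u¹, u²) whose Jacobian determinant |∂A| := (∂A¹/∂u¹)(∂A²/∂u²) − (∂A¹/∂u²)(∂A²/∂u¹) is nonzero at every point. Let u = (u¹, u²) : ℝ² → ℝ² be C¹ and let P¹, P² : ℝ² → ℝ be C¹. Define α, β : ℝ² → ℝ by Cramer's formulas along u: α = (A²_{u²}·P¹ − A¹_{u²}·P²)/|∂A| and β = (A¹_{u¹}·P² − A²_{u¹}·P¹)/|∂A|, all partial derivatives of the A's evaluated at (x, u(x)). Then: (i) for each i = 1,2 and each x, the derivative at ε = 0 of ε ↦ A^i(x, u(x) + ε(α(x), β(x))) equals P^i(x); and (ii) if additionally α, β are C¹, the derivative at ε =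 0 of ε ↦ ∂/∂x₁[A¹(x, u + ε(α,β))] + ∂/∂x₂[A²(x, u + ε(α,β))] equals ∂P¹/∂x₁ + ∂P²/∂x₂ at every x. Hence the vector field with characteristics (α, β) deforms the flux pair (A¹, A²) into the flux pair (P¹, P²), and deforms the divergence D₁A¹ + D₂A² into the divergence D₁P¹ + D₂P². -/
private lemma clm_eval_pair (L : (ℝ × ℝ) × (ℝ × ℝ) →L[ℝ] ℝ) (a b : ℝ) :
    L (((0 : ℝ), (0 : ℝ)), (a, b))
      = a * L (((0 : ℝ), (0 : ℝ)), ((1 : ℝ), (0 : ℝ)))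
        + b * L (((0 : ℝ), (0 : ℝ)), ((0 : ℝ), (1 : ℝ))) := by
  have h : ((((0 : ℝ), (0 : ℝ)), (a, b)) : (ℝ × ℝ) × (ℝ × ℝ))
      = a • ((((0:ℝ),(0:ℝ)), ((1:ℝ),(0:ℝ))) : (ℝ × ℝ) × (ℝ × ℝ))
        + b • ((((0:ℝ),(0:ℝ)), ((0:ℝ),(1:ℝ))) : (ℝ × ℝ) × (ℝ × ℝ)) := by
    simp [Prod.ext_iff]
  rw [h, map_add, map_smul, map_smul, smul_eq_mul, smul_eq_mul]

private lemma hasDerivAt_line {E : Type*} [NormedAddCommGroup E] [NormedSpace ℝ E]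
    (p w : E) : HasDerivAt (fun ε : ℝ => p + ε • w) w 0 := by
  simpa using ((hasDerivAt_id (0:ℝ)).smul_const w).const_add p

private lemma deform_pt (A : (ℝ×ℝ)×(ℝ×ℝ) → ℝ) (hA : Differentiable ℝ A)
    (x uq v : ℝ × ℝ) :
    HasDerivAt (fun ε : ℝ => A (x, uq + ε • v))
      (fderiv ℝ A (x, uq) (((0:ℝ),(0:ℝ)), v)) 0 := by
  have hline := hasDerivAt_line ((x, uq) : (ℝ×ℝ)×(ℝ×ℝ)) ((((0:ℝ),(0:ℝ)), v))
  have hA' : HasFDerivAt A (fderiv ℝ A (x, uq)) ((x,uq) + (0:ℝ) • ((((0:ℝ),(0:ℝ)), v) : (ℝ×ℝ)×(ℝ×ℝ))) := by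
    rw [zero_smul, add_zero]; exact (hA _).hasFDerivAt
  have h := hA'.comp_hasDerivAt 0 hline
  have hfun : (fun ε : ℝ => A (x, uq + ε • v))
      = fun ε : ℝ => A ((x, uq) + ε • ((((0:ℝ),(0:ℝ)), v) : (ℝ×ℝ)×(ℝ×ℝ))) := by
    funext ε; congr 1; simp [Prod.ext_iff]
  rw [hfun]; exact h

private lemma flux_deriv_swap (A : (ℝ×ℝ)×(ℝ×ℝ) → ℝ) (hA : ContDiff ℝ 2 A)
    (u vf : ℝ×ℝ → ℝ×ℝ) (hu : Differentiable ℝ u) (hvf : Differentiable ℝ vf)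
    (σ : ℝ → ℝ×ℝ) (t : ℝ) (d : ℝ×ℝ) (hσ : HasDerivAt σ d t) :
    HasDerivAt (fun ε : ℝ => deriv (fun s => A (σ s, u (σ s) + ε • vf (σ s))) t)
      (deriv (fun s => fderiv ℝ A (σ s, u (σ s)) (((0:ℝ),(0:ℝ)), vf (σ s))) t) 0 := by
  have hAd : Differentiable ℝ A := hA.differentiable (by norm_num)
  have hU : HasDerivAt (fun s => u (σ s)) (fderiv ℝ u (σ t) d) t :=
    (hu _).hasFDerivAt.comp_hasDerivAt t hσ
  have hV : HasDerivAt (fun s => vf (σ s)) (fderiv ℝ vf (σ t) d) t :=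
    (hvf _).hasFDerivAt.comp_hasDerivAt t hσ
  set w1 := fderiv ℝ u (σ t) d with hw1
  set w2 := fderiv ℝ vf (σ t) d with hw2
  set p : (ℝ×ℝ)×(ℝ×ℝ) := (σ t, u (σ t)) with hp
  set v : ℝ×ℝ := vf (σ t) with hv
  have hΦ : ContDiff ℝ 1 (fderiv ℝ A) := hA.fderiv_right (by norm_num)
  have hΦd : Differentiable ℝ (fderiv ℝ A) := hΦ.differentiable one_ne_zero
  set Φ := fderiv ℝ A with hΦdef
  set S := fderiv ℝ Φ p with hS
  set e : (ℝ×ℝ)×(ℝ×ℝ) := (((0:ℝ),(0:ℝ)), v) with he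
  set z1 : (ℝ×ℝ)×(ℝ×ℝ) := (d, w1) with hz1
  set z2 : (ℝ×ℝ)×(ℝ×ℝ) := (((0:ℝ),(0:ℝ)), w2) with hz2
  -- Step A : value of the inner deriv for each ε
  have stepA : ∀ ε : ℝ, deriv (fun s => A (σ s, u (σ s) + ε • vf (σ s))) t
      = Φ (p + ε • e) z1 + ε * Φ (p + ε • e) z2 := by
    intro ε
    have hγ : HasDerivAt (fun s => ((σ s, u (σ s) + ε • vf (σ s)) : (ℝ×ℝ)×(ℝ×ℝ)))
        (d, w1 + ε • w2) t := HasDerivAt.prodMk hσ (hU.add (hV.const_smul ε))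
    have hcomp : HasDerivAt (fun s => A (σ s, u (σ s) + ε • vf (σ s)))
        (Φ (σ t, u (σ t) + ε • vf (σ t)) (d, w1 + ε • w2)) t :=
      (hAd _).hasFDerivAt.comp_hasDerivAt t hγ
    rw [hcomp.deriv]
    have h1 : ((σ t, u (σ t) + ε • vf (σ t)) : (ℝ×ℝ)×(ℝ×ℝ)) = p + ε • e := by
      simp [hp, he, hv, Prod.ext_iff]
    have h2 : ((d, w1 + ε • w2) : (ℝ×ℝ)×(ℝ×ℝ)) = z1 + ε • z2 := by
      simp [hz1, hz2, Prod.ext_iff]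
    rw [h1, h2, map_add, map_smul, smul_eq_mul]
  -- Step B : derivative in ε of the explicit formula
  have hline : HasDerivAt (fun ε : ℝ => p + ε • e) e 0 := hasDerivAt_line p e
  have hΦc : HasDerivAt (fun ε : ℝ => Φ (p + ε • e)) (S e) 0 := by
    have h0 : HasFDerivAt Φ (fderiv ℝ Φ p) (p + (0:ℝ) • e) := by
      rw [zero_smul, add_zero]; exact (hΦd p).hasFDerivAt
    exact h0.comp_hasDerivAt 0 hline
  have hterm1 : HasDerivAt (fun ε : ℝ => Φ (p + ε • e) z1) (S e z1) 0 := by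
    simpa using hΦc.clm_apply (hasDerivAt_const 0 z1)
  have hterm2 : HasDerivAt (fun ε : ℝ => ε * Φ (p + ε • e) z2) (Φ p z2) 0 := by
    have h2 : HasDerivAt (fun ε : ℝ => Φ (p + ε • e) z2) (S e z2) 0 := by
      simpa using hΦc.clm_apply (hasDerivAt_const 0 z2)
    have h3 := (hasDerivAt_id' (x := (0:ℝ))).mul h2
    simp only [one_mul, zero_mul, zero_smul, add_zero] at h3
    exact h3
  have stepB : HasDerivAt (fun ε : ℝ => Φ (p + ε • e) z1 + ε * Φ (p + ε • e) z2)
      (S e z1 + Φ p z2) 0 := hterm1.add hterm2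
  -- Step C : the right-hand side deriv
  have hγ0 : HasDerivAt (fun s => ((σ s, u (σ s)) : (ℝ×ℝ)×(ℝ×ℝ))) z1 t := HasDerivAt.prodMk hσ hU
  have hΦγ : HasDerivAt (fun s => Φ (σ s, u (σ s))) (S z1) t :=
    (hΦd _).hasFDerivAt.comp_hasDerivAt t hγ0
  have harg : HasDerivAt (fun s => ((((0:ℝ),(0:ℝ)), vf (σ s)) : (ℝ×ℝ)×(ℝ×ℝ))) z2 t :=
    HasDerivAt.prodMk (hasDerivAt_const t (((0:ℝ),(0:ℝ)) : ℝ×ℝ)) hV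
  have hRHS : HasDerivAt (fun s => Φ (σ s, u (σ s)) (((0:ℝ),(0:ℝ)), vf (σ s)))
      (S z1 e + Φ p z2) t := hΦγ.clm_apply harg
  have hsymm : S e z1 = S z1 e :=
    second_derivative_symmetric (fun y => (hAd y).hasFDerivAt) ((hΦd p).hasFDerivAt) e z1
  rw [hRHS.deriv, ← hsymm]
  have hfun : (fun ε : ℝ => deriv (fun s => A (σ s, u (σ s) + ε • vf (σ s))) t)
      = fun ε : ℝ => Φ (p + ε • e) z1 + ε * Φ (p + ε • e) z2 := funext stepA
  rw [hfun]; exact stepB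
/-- Partial derivative `∂/∂x₁` of a function of `x = (x₁, x₂)`. -/
noncomputable def d1 (f : ℝ × ℝ → ℝ) (p : ℝ × ℝ) : ℝ := deriv (fun s => f (s, p.2)) p.1

/-- Partial derivative `∂/∂x₂` of a function of `x = (x₁, x₂)`. -/
noncomputable def d2 (f : ℝ × ℝ → ℝ) (p : ℝ × ℝ) : ℝ := deriv (fun s => f (p.1, s)) p.2

/-- Partial derivative `∂A/∂u¹` of a flux `A(x, u)`, `x ∈ ℝ²`, `u ∈ ℝ²`. -/
noncomputable def dU1 (A : (ℝ × ℝ) × (ℝ × ℝ) → ℝ) (p : (ℝ × ℝ) × (ℝ × ℝ)) : ℝ :=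
  fderiv ℝ A p (((0 : ℝ), (0 : ℝ)), ((1 : ℝ), (0 : ℝ)))

/-- Partial derivative `∂A/∂u²` of a flux `A(x, u)`, `x ∈ ℝ²`, `u ∈ ℝ²`. -/
noncomputable def dU2 (A : (ℝ × ℝ) × (ℝ × ℝ) → ℝ) (p : (ℝ × ℝ) × (ℝ × ℝ)) : ℝ :=
  fderiv ℝ A p (((0 : ℝ), (0 : ℝ)), ((0 : ℝ), (1 : ℝ)))

/-- Constructive core of the sub-symmetry deformation theorem: given fluxes `A¹, A²`
depending on `(x, u)` with everywhere nonzero Jacobian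
`|∂A| = A¹_{u¹} A²_{u²} − A¹_{u²} A²_{u¹}`, and fluxes `P¹, P²`, the characteristics
`(α, β)` obtained by Cramer's formulas deform `(A¹, A²)` into `(P¹, P²)` pointwise, and
(if `α, β` are C¹) deform the divergence `D₁A¹ + D₂A²` into `D₁P¹ + D₂P²`. -/
theorem subsymmetry_deformation_of_CL
    (A1 A2 : (ℝ × ℝ) × (ℝ × ℝ) → ℝ)
    (hA1 : ContDiff ℝ 2 A1) (hA2 : ContDiff ℝ 2 A2)
    (hJ : ∀ p : (ℝ × ℝ) × (ℝ × ℝ), dU1 A1 p * dU2 A2 p - dU2 A1 p * dU1 A2 p ≠ 0)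
    (u : ℝ × ℝ → ℝ × ℝ) (hu : ContDiff ℝ 1 u)
    (P1 P2 : ℝ × ℝ → ℝ) (hP1 : ContDiff ℝ 1 P1) (hP2 : ContDiff ℝ 1 P2)
    (α β : ℝ × ℝ → ℝ)
    (hα : ∀ x : ℝ × ℝ, α x =
      (dU2 A2 (x, u x) * P1 x - dU2 A1 (x, u x) * P2 x) /
        (dU1 A1 (x, u x) * dU2 A2 (x, u x) - dU2 A1 (x, u x) * dU1 A2 (x, u x)))
    (hβ : ∀ x : ℝ × ℝ, β x =
      (dU1 A1 (x, u x) * P2 x - dU1 A2 (x, u x) * P1 x) /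
        (dU1 A1 (x, u x) * dU2 A2 (x, u x) - dU2 A1 (x, u x) * dU1 A2 (x, u x))) :
    (∀ x : ℝ × ℝ,
      HasDerivAt (fun ε : ℝ => A1 (x, u x + ε • (α x, β x))) (P1 x) 0 ∧
      HasDerivAt (fun ε : ℝ => A2 (x, u x + ε • (α x, β x))) (P2 x) 0) ∧
    (ContDiff ℝ 1 α → ContDiff ℝ 1 β →
      ∀ x : ℝ × ℝ,
        HasDerivAt (fun ε : ℝ =>
            d1 (fun y => A1 (y, u y + ε • (α y, β y))) x
              + d2 (fun y => A2 (y, u y + ε • (α y, β y))) x)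
          (d1 P1 x + d2 P2 x) 0) := by

  have hA1d : Differentiable ℝ A1 := hA1.differentiable (by norm_num)
  have hA2d : Differentiable ℝ A2 := hA2.differentiable (by norm_num)
  have keyP1 : ∀ x : ℝ × ℝ,
      fderiv ℝ A1 (x, u x) (((0:ℝ),(0:ℝ)), (α x, β x)) = P1 x := by
    intro x
    rw [clm_eval_pair]
    show α x * dU1 A1 (x, u x) + β x * dU2 A1 (x, u x) = P1 x
    rw [hα x, hβ x]
    rw [div_mul_eq_mul_div, div_mul_eq_mul_div, ← add_div, div_eq_iff (hJ (x, u x))]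
    ring
  have keyP2 : ∀ x : ℝ × ℝ,
      fderiv ℝ A2 (x, u x) (((0:ℝ),(0:ℝ)), (α x, β x)) = P2 x := by
    intro x
    rw [clm_eval_pair]
    show α x * dU1 A2 (x, u x) + β x * dU2 A2 (x, u x) = P2 x
    rw [hα x, hβ x]
    rw [div_mul_eq_mul_div, div_mul_eq_mul_div, ← add_div, div_eq_iff (hJ (x, u x))]
    ring
  constructor
  · intro x
    constructor
    · have h := deform_pt A1 hA1d x (u x) (α x, β x)
      rwa [keyP1 x] at h
    · have h := deform_pt A2 hA2d x (u x) (α x, β x)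
      rwa [keyP2 x] at h
  · intro hα' hβ' x
    have hvf : ContDiff ℝ 1 (fun y => ((α y, β y) : ℝ × ℝ)) := ContDiff.prodMk hα' hβ'
    have hσ1 : HasDerivAt (fun s : ℝ => ((s, x.2) : ℝ × ℝ)) (((1:ℝ),(0:ℝ)) : ℝ × ℝ) x.1 :=
      HasDerivAt.prodMk (hasDerivAt_id x.1) (hasDerivAt_const x.1 x.2)
    have hσ2 : HasDerivAt (fun s : ℝ => ((x.1, s) : ℝ × ℝ)) (((0:ℝ),(1:ℝ)) : ℝ × ℝ) x.2 :=
      HasDerivAt.prodMk (hasDerivAt_const x.2 x.1) (hasDerivAt_id x.2)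
    have H1 := flux_deriv_swap A1 hA1 u (fun y => (α y, β y))
      (hu.differentiable one_ne_zero) (hvf.differentiable one_ne_zero)
      (fun s => (s, x.2)) x.1 ((1:ℝ),(0:ℝ)) hσ1
    have H2 := flux_deriv_swap A2 hA2 u (fun y => (α y, β y))
      (hu.differentiable one_ne_zero) (hvf.differentiable one_ne_zero)
      (fun s => (x.1, s)) x.2 ((0:ℝ),(1:ℝ)) hσ2
    have e1 : d1 P1 x
        = deriv (fun s => fderiv ℝ A1 ((s, x.2), u (s, x.2))
            (((0:ℝ),(0:ℝ)), (α (s, x.2), β (s, x.2)))) x.1 := by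
      unfold d1
      congr 1
      funext s
      exact (keyP1 (s, x.2)).symm
    have e2 : d2 P2 x
        = deriv (fun s => fderiv ℝ A2 ((x.1, s), u (x.1, s))
            (((0:ℝ),(0:ℝ)), (α (x.1, s), β (x.1, s)))) x.2 := by
      unfold d2
      congr 1
      funext s
      exact (keyP2 (x.1, s)).symm
    rw [e1, e2]
    exact H1.add H2
end
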